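/- Let (R, Δ) be an odd form ring with a hyperbolic pair η. Then the elementary dilation map D^η : (R_{ηη})* → U(R, Δ), given by β(D^η(a)) = a + conj(a)⁻¹ − e_{|η|} and γ(D^η(a)) = q_{−η}·(conj(a)⁻¹ − e_{−η}) ∔ q_η·(a − e_η) ∸ φ(a − e_η), is a well-defined injective group homomorphism, and D^{−η}(a) = D^η(conj(a)⁻¹). Moreover, for all u ∈ Δ_η^{|η|'} and a ∈ (R_{ηη})*, the conjugation identity D^η(a)⁻¹ T^η(u) D^η(a) = T^η(u·a) holds. -/

import Mathlib

open scoped commutatorElement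

/-- An odd form ring `(R, Δ)`: a non-unital ring `R` with involution `conj`,
a group `Δ` with a right action of the multiplicative semigroup `R^•` and
structure maps `phi : R → Δ`, `pi ρ : Δ → R` satisfying the odd form ring
axioms.  The group operation of `Δ` (written `∔` in the paper) is written
multiplicatively here. -/
structure OddForm (R Δ : Type*) [NonUnitalRing R] [Group Δ] where
  conj : R → R
  conj_add : ∀ a b, conj (a + b) = conj a + conj b
  conj_mul : ∀ a b, conj (a * b) = conj b * conj a
  conj_conj : ∀ a, conj (conj a) = a
  act : Δ → R → Δ
  act_mul : ∀ u v a, act (u * v) a = act u a * act v a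
  act_act : ∀ u a b, act (act u a) b = act u (a * b)
  phi : R → Δ
  pi : Δ → R
  rho : Δ → R
  pi_mul : ∀ u v, pi (u * v) = pi u + pi v
  pi_act : ∀ u a, pi (act u a) = pi u * a
  phi_add : ∀ a b, phi (a + b) = phi a * phi b
  phi_act : ∀ a b, act (phi b) a = phi (conj a * b * a)
  rho_mul : ∀ u v, rho (u * v) = rho u - conj (pi u) * pi v + rho v
  rho_act : ∀ u a, rho (act u a) = conj a * rho u * a
  rho_pi : ∀ u, rho u + conj (rho u) + conj (pi u) * pi u = 0
  pi_phi : ∀ a, pi (phi a) = 0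
  rho_phi : ∀ a, rho (phi a) = a - conj a
  comm_phi : ∀ u v, ⁅u, v⁆ = phi (-(conj (pi u) * pi v))
  phi_symm : ∀ a, conj a = a → phi a = 1
  act_addR : ∀ u a b, act u (a + b) = act u a * phi (conj b * rho u * a) * act u b

namespace OddForm

variable {R Δ : Type*} [NonUnitalRing R] [Group Δ]

/-- The action of `a + 1` (an element of the unitalization `R ⋊ ℤ`) on `Δ`:
`u · (a + 1) = u·a ∔ φ(ρ(u) a) ∔ u`. -/
def actA (o : OddForm R Δ) (u : Δ) (a : R) : Δ :=
  o.act u a * o.phi (o.rho u * a) * u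

/-- Membership in the unitary group `U(R, Δ)`: for `g = (β, γ)` with `α = β + 1`,
`α⁻¹ = conj α` (expressed without the unitalization) together with `π(γ) = β` and
`ρ(γ) = conj β`. -/
def umem (o : OddForm R Δ) (g : R × Δ) : Prop :=
  g.1 * o.conj g.1 + g.1 + o.conj g.1 = 0 ∧
  o.conj g.1 * g.1 + o.conj g.1 + g.1 = 0 ∧
  o.pi g.2 = g.1 ∧ o.rho g.2 = o.conj g.1

/-- The group operation of the unitary group: `α(gg') = α(g) α(g')` and
`γ(gg') = γ(g) · α(g') ∔ γ(g')`. -/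
def umul (o : OddForm R Δ) (g h : R × Δ) : R × Δ :=
  (g.1 * h.1 + g.1 + h.1, o.actA g.2 h.1 * h.2)

/-- The identity element of the unitary group. -/
def uone (o : OddForm R Δ) : R × Δ := ((0 : R), (1 : Δ))

/-- The inverse in the unitary group: `β(g⁻¹) = conj β(g)`,
`γ(g⁻¹) = (γ(g) · conj α(g))⁻¹`. -/
def uinv (o : OddForm R Δ) (g : R × Δ) : R × Δ :=
  (o.conj g.1, (o.actA g.2 (o.conj g.1))⁻¹)

end OddForm

namespace OddForm

variable {R Δ : Type*} [NonUnitalRing R] [Group Δ]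

/-- `η = (em, ep, qm, qp)` is a hyperbolic pair: `ep = e_η`, `em = e_{−η}` are
orthogonal idempotents with `em = conj ep`, and `qp = q_η`, `qm = q_{−η}` satisfy
`π(q_{±η}) = e_{±η}`, `ρ(q_{±η}) = 0`, `q_{±η} = q_{±η}·e_{±η}`. -/
def IsHPair (o : OddForm R Δ) (em ep : R) (qm qp : Δ) : Prop :=
  ep * ep = ep ∧ em * em = em ∧ ep * em = 0 ∧ em * ep = 0 ∧
  o.conj ep = em ∧
  o.pi qp = ep ∧ o.pi qm = em ∧ o.rho qp = 0 ∧ o.rho qm = 0 ∧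
  o.act qp ep = qp ∧ o.act qm em = qm

/-- Membership in `Δ_η^{|η|'} = {u ∈ Δ·e_η | e_{|η|} π(u) = 0}`. -/
def Dmem (o : OddForm R Δ) (em ep : R) (u : Δ) : Prop :=
  o.act u ep = u ∧ (ep + em) * o.pi u = 0

/-- The transvection `T^η(u)`, as an element of `R × Δ`:
`β = ρ(u) + π(u) − conj π(u)`,
`γ = u ∔ q_{−η}·(ρ(u) − conj π(u)) ∸ φ(ρ(u) + π(u))`. -/
def Tv (o : OddForm R Δ) (qm : Δ) (u : Δ) : R × Δ :=
  (o.rho u + o.pi u - o.conj (o.pi u),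
   u * o.act qm (o.rho u - o.conj (o.pi u)) * (o.phi (o.rho u + o.pi u))⁻¹)

/-- `a` and `b` are mutually inverse elements of the unital ring
`R_{ηη} = e_η R e_η` (with identity `ep`). -/
def IsInvPair (ep a b : R) : Prop :=
  a = ep * a * ep ∧ b = ep * b * ep ∧ a * b = ep ∧ b * a = ep

/-- The elementary dilation `D^η(a)` (with `b = a⁻¹` in `R_{ηη}`):
`β = a + conj(a)⁻¹ − e_{|η|}`,
`γ = q_{−η}·(conj(a)⁻¹ − e_{−η}) ∔ q_η·(a − e_η) ∸ φ(a − e_η)`. -/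
def Dil (o : OddForm R Δ) (em ep : R) (qm qp : Δ) (a b : R) : R × Δ :=
  (a + o.conj b - (ep + em),
   o.act qm (o.conj b - em) * o.act qp (a - ep) * (o.phi (a - ep))⁻¹)

/-- Membership in the maximal parabolic subgroup `P_η`. -/
def Pmem (o : OddForm R Δ) (em ep : R) (qm : Δ) (g : R × Δ) : Prop :=
  o.umem g ∧ g.1 * em = em * g.1 * em ∧ ep * g.1 = ep * g.1 * ep ∧
  o.act g.2 em = o.act qm (g.1 * em)

/-- Membership in the smaller unitary group `U_{|η|'}`. -/
def Uprime (o : OddForm R Δ) (em ep : R) (g : R × Δ) : Prop :=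
  o.umem g ∧ g.1 * (ep + em) = 0 ∧ (ep + em) * g.1 = 0 ∧ o.act g.2 (ep + em) = 1

end OddForm

namespace OddForm

variable {R Δ : Type*} [NonUnitalRing R] [Group Δ] (o : OddForm R Δ)

theorem phi_zero : o.phi 0 = 1 := by
  have h := o.phi_add 0 0
  rw [add_zero] at h
  have := mul_right_cancel (a := o.phi 0) (b := o.phi 0) (c := 1)
  exact (mul_left_cancel (a := o.phi 0) (by rw [← h, mul_one])).symm

theorem phi_neg (a : R) : o.phi (-a) = (o.phi a)⁻¹ :=
  eq_inv_of_mul_eq_one_left (by rw [← o.phi_add, neg_add_cancel, o.phi_zero])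

theorem conj_zero : o.conj 0 = 0 := by
  have h := o.conj_add 0 0
  rw [add_zero] at h
  exact left_eq_add.mp h

theorem conj_neg (a : R) : o.conj (-a) = -o.conj a := by
  have h := o.conj_add a (-a)
  rw [add_neg_cancel, o.conj_zero] at h
  exact eq_neg_of_add_eq_zero_right h.symm

theorem conj_sub (a b : R) : o.conj (a - b) = o.conj a - o.conj b := by
  rw [sub_eq_add_neg, o.conj_add, o.conj_neg, sub_eq_add_neg]

theorem pi_one : o.pi 1 = 0 := by
  have h := o.pi_mul 1 1
  rw [mul_one] at h
  exact left_eq_add.mp h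

theorem act_zero (u : Δ) : o.act u 0 = 1 := by
  have h := o.act_addR u 0 0
  rw [add_zero, o.conj_zero, zero_mul, zero_mul, o.phi_zero, mul_one] at h
  exact (mul_left_cancel (a := o.act u 0) (by rw [← h, mul_one])).symm

theorem phi_central (c : R) (v : Δ) : o.phi c * v = v * o.phi c := by
  have h := o.comm_phi v (o.phi c)
  rw [o.pi_phi, mul_zero, neg_zero, o.phi_zero] at h
  have := commutatorElement_eq_one_iff_mul_comm.mp h
  exact this.symm

/-- Swap two elements at the cost of a central `phi` factor. -/
theorem swap (v w : Δ) :
    v * w = o.phi (-(o.conj (o.pi v) * o.pi w)) * (w * v) := by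
  have h := o.comm_phi v w
  calc v * w = (v * w * v⁻¹ * w⁻¹) * (w * v) := by group
    _ = _ := by rw [← commutatorElement_def, h]

theorem commute_of (v w : Δ) (h : o.conj (o.pi v) * o.pi w = 0) :
    v * w = w * v := by
  rw [o.swap v w, h, neg_zero, o.phi_zero, one_mul]

/-- Merging two `act u` factors. -/
theorem merge_act (u : Δ) (A B : R) :
    o.act u A * o.act u B
      = o.act u (A + B) * o.phi (-(o.conj B * o.rho u * A)) := by
  rw [o.act_addR u A B, mul_assoc (o.act u A), o.phi_central, ← mul_assoc,
    mul_assoc (o.act u A * o.act u B), ← o.phi_add, add_neg_cancel, o.phi_zero,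
    mul_one]

end OddForm
namespace OddForm

variable {R Δ : Type*} [NonUnitalRing R] [Group Δ] (o : OddForm R Δ)

theorem cmove (c : R) (x y : Δ) : x * (o.phi c * y) = o.phi c * (x * y) := by
  rw [← mul_assoc, ← o.phi_central, mul_assoc]

theorem cmove1 (c : R) (x : Δ) : x * o.phi c = o.phi c * x :=
  (o.phi_central c x).symm

theorem cmerge (c d : R) (x : Δ) : o.phi c * (o.phi d * x) = o.phi (c + d) * x := by
  rw [← mul_assoc, ← o.phi_add]

theorem cmerge1 (c d : R) : o.phi c * o.phi d = o.phi (c + d) :=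
  (o.phi_add c d).symm

theorem comm' (v w x : Δ) (h : o.conj (o.pi v) * o.pi w = 0) :
    v * (w * x) = w * (v * x) := by
  rw [← mul_assoc, o.commute_of v w h, mul_assoc]

theorem swap' (v w x : Δ) :
    v * (w * x) = o.phi (-(o.conj (o.pi v) * o.pi w)) * (w * (v * x)) := by
  rw [← mul_assoc, o.swap v w, mul_assoc, mul_assoc]

theorem merge_act' (u : Δ) (A B : R) (x : Δ) :
    o.act u A * (o.act u B * x)
      = o.act u (A + B) * (o.phi (-(o.conj B * o.rho u * A)) * x) := by
  rw [← mul_assoc, o.merge_act, mul_assoc]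

/-- Normal form for elements of the unitary group relative to a hyperbolic
pair: `act u X * act qm Y * act qp Z * phi W`. -/
def Cf (u qm qp : Δ) (X Y Z W : R) : Δ :=
  o.act u X * o.act qm Y * o.act qp Z * o.phi W

theorem mulC (u qm qp : Δ) (X Y Z W X' Y' Z' W' : R)
    (hc1 : o.conj (o.pi qp) * o.pi u = 0)
    (hc2 : o.conj (o.pi qm) * o.pi u = 0) :
    o.Cf u qm qp X Y Z W * o.Cf u qm qp X' Y' Z' W'
      = o.Cf u qm qp (X + X') (Y + Y') (Z + Z')
          (W + W' + -(o.conj X' * o.rho u * X) + -(o.conj Y' * o.rho qm * Y)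
            + -(o.conj Z' * o.rho qp * Z)
            + -(o.conj (o.pi qp * Z) * (o.pi qm * Y'))) := by
  have e1 : o.conj (o.pi (o.act qp Z)) * o.pi (o.act u X') = 0 := by
    rw [o.pi_act, o.pi_act, o.conj_mul, mul_assoc,
      ← mul_assoc (o.conj (o.pi qp)), hc1, zero_mul, mul_zero]
  have e2 : o.conj (o.pi (o.act qm Y)) * o.pi (o.act u X') = 0 := by
    rw [o.pi_act, o.pi_act, o.conj_mul, mul_assoc,
      ← mul_assoc (o.conj (o.pi qm)), hc2, zero_mul, mul_zero]
  simp only [Cf, mul_assoc]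
  rw [← o.cmove W (o.act u X'), o.comm' _ _ _ e1, o.comm' _ _ _ e2,
    o.merge_act' u X X', ← o.cmove W (o.act qm Y'),
    o.swap' (o.act qp Z) (o.act qm Y')]
  rw [o.cmove _ (o.act qm Y), o.merge_act' qm Y Y',
    o.cmove _ (o.act qp Z), o.merge_act' qp Z Z',
    ← o.cmove _ (o.act qm (Y + Y')), ← o.cmove _ (o.act qm (Y + Y')),
    ← o.cmove _ (o.act qp (Z + Z')), ← o.cmove _ (o.act qp (Z + Z')),
    ← o.cmove _ (o.act qp (Z + Z')), ← o.cmove _ (o.act qp (Z + Z'))]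
  simp only [o.cmerge, o.cmerge1]
  congr 4
  simp only [o.pi_act, o.conj_mul, mul_assoc]
  abel

end OddForm
namespace OddForm

variable {R Δ : Type*} [NonUnitalRing R] [Group Δ] (o : OddForm R Δ)

theorem actA_mul (v w : Δ) (s : R) :
    o.actA (v * w) s = o.actA v s * o.actA w s := by
  simp only [actA, o.act_mul, o.rho_mul, mul_assoc]
  rw [o.swap' v (o.act w s), o.cmove _ v]
  rw [o.cmove _ (o.act w s), o.cmove _ (o.act v s)]
  rw [o.cmove _ (o.act w s), o.cmove _ (o.act v s), o.cmove _ (o.act v s),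
    o.cmove _ (o.act v s)]
  simp only [o.cmerge, o.cmerge1]
  congr 2
  simp only [o.pi_act, mul_assoc, sub_mul, add_mul, neg_mul]
  abel

theorem actA_act (v : Δ) (X s : R) :
    o.actA (o.act v X) s = o.act v (X * s + X) := by
  rw [actA, o.act_act, o.rho_act, mul_assoc, o.cmove _ (o.act v (X * s)),
    o.merge_act, o.cmove1 _ (o.act v (X * s + X)), o.cmerge]
  have : o.conj X * o.rho v * X * s + -(o.conj X * o.rho v * (X * s)) = 0 := by
    rw [mul_assoc (o.conj X * o.rho v)]; exact add_neg_cancel _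
  rw [this, o.phi_zero, one_mul]

theorem actA_phi (c s : R) :
    o.actA (o.phi c) s
      = o.phi (o.conj s * c * s + ((c - o.conj c) * s + c)) := by
  rw [actA, o.phi_act, o.rho_phi, mul_assoc, o.cmerge1, o.cmerge1]

theorem actA_C (u qm qp : Δ) (X Y Z W s : R) :
    o.actA (o.Cf u qm qp X Y Z W) s
      = o.Cf u qm qp (X * s + X) (Y * s + Y) (Z * s + Z)
          (o.conj s * W * s + ((W - o.conj W) * s + W)) := by
  rw [Cf, o.actA_mul, o.actA_mul, o.actA_mul, o.actA_act, o.actA_act,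
    o.actA_act, o.actA_phi, Cf]

end OddForm
namespace OddForm

variable {R Δ : Type*} [NonUnitalRing R] [Group Δ] (o : OddForm R Δ)

theorem mule {x y z w : R} (h : x * y = z) : x * (y * w) = z * w := by
  rw [← mul_assoc, h]

theorem idem_mul_right {e f x : R} (hff : f * f = f) (h : x = e * x * f) :
    x * f = x := by rw [h, mul_assoc (e * x), hff]

theorem idem_mul_left {e f x : R} (hee : e * e = e) (h : x = e * x * f) :
    e * x = x := by rw [h, ← mul_assoc, ← mul_assoc, hee]

theorem mul_eq_zero_of_right {e x y : R} (hx : x * e = x) (he : e * y = 0) :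
    x * y = 0 := by rw [← hx, mul_assoc, he, mul_zero]

theorem mul_eq_zero_of_left {e x y : R} (hy : e * y = y) (he : x * e = 0) :
    x * y = 0 := by rw [← hy, ← mul_assoc, he, zero_mul]

theorem phi_congr {W W' : R} (h : o.conj (W - W') = W - W') :
    o.phi W = o.phi W' := by
  have h1 : o.phi (W - W') = 1 := o.phi_symm _ h
  rw [← sub_add_cancel W W', o.phi_add, h1, one_mul]

theorem C_congr {u qm qp : Δ} {X Y Z W X' Y' Z' W' : R} (hX : X = X')
    (hY : Y = Y') (hZ : Z = Z') (hW : o.phi W = o.phi W') :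
    o.Cf u qm qp X Y Z W = o.Cf u qm qp X' Y' Z' W' := by
  rw [Cf, Cf, hX, hY, hZ, hW]

theorem Dil_snd {em ep : R} (v qm qp : Δ) (a b : R) :
    (Dil o em ep qm qp a b).2
      = o.Cf v qm qp 0 (o.conj b - em) (a - ep) (ep - a) := by
  simp only [Dil, Cf, o.act_zero, one_mul, ← o.phi_neg, neg_sub]

theorem Tv_snd {ep : R} (u qm qp : Δ) (hu : o.act u ep = u) :
    (Tv o qm u).2
      = o.Cf u qm qp ep (o.rho u - o.conj (o.pi u)) 0
          (-(o.rho u + o.pi u)) := by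
  simp only [Tv, Cf, o.act_zero, mul_one, hu, ← o.phi_neg]

theorem Tv_snd' (u qm qp : Δ) (a : R) :
    (Tv o qm (o.act u a)).2
      = o.Cf u qm qp a
          (o.rho (o.act u a) - o.conj (o.pi (o.act u a))) 0
          (-(o.rho (o.act u a) + o.pi (o.act u a))) := by
  simp only [Tv, Cf, o.act_zero, mul_one, ← o.phi_neg]

theorem pair_facts {ep em a b : R} (hpp : ep * ep = ep) (hmm : em * em = em)
    (hpm : ep * em = 0) (hmp : em * ep = 0) (hcp : o.conj ep = em)
    (h : IsInvPair ep a b) :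
    (a * ep = a ∧ ep * a = a ∧ a * em = 0 ∧ em * a = 0) ∧
    (b * ep = b ∧ ep * b = b ∧ b * em = 0 ∧ em * b = 0) ∧
    (o.conj a * em = o.conj a ∧ em * o.conj a = o.conj a ∧
      o.conj a * ep = 0 ∧ ep * o.conj a = 0) ∧
    (o.conj b * em = o.conj b ∧ em * o.conj b = o.conj b ∧
      o.conj b * ep = 0 ∧ ep * o.conj b = 0) ∧
    (o.conj a * o.conj b = em ∧ o.conj b * o.conj a = em) := by
  obtain ⟨ha, hb, hab, hba⟩ := h
  have hca : o.conj a = em * o.conj a * em := by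
    conv_lhs => rw [ha]
    rw [o.conj_mul, o.conj_mul, hcp, ← mul_assoc]
  have hcb : o.conj b = em * o.conj b * em := by
    conv_lhs => rw [hb]
    rw [o.conj_mul, o.conj_mul, hcp, ← mul_assoc]
  refine ⟨⟨idem_mul_right hpp ha, idem_mul_left hpp ha, ?_, ?_⟩,
    ⟨idem_mul_right hpp hb, idem_mul_left hpp hb, ?_, ?_⟩,
    ⟨idem_mul_right hmm hca, idem_mul_left hmm hca, ?_, ?_⟩,
    ⟨idem_mul_right hmm hcb, idem_mul_left hmm hcb, ?_, ?_⟩, ?_, ?_⟩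
  · exact mul_eq_zero_of_right (idem_mul_right hpp ha) hpm
  · exact mul_eq_zero_of_left (idem_mul_left hpp ha) hmp
  · exact mul_eq_zero_of_right (idem_mul_right hpp hb) hpm
  · exact mul_eq_zero_of_left (idem_mul_left hpp hb) hmp
  · exact mul_eq_zero_of_right (idem_mul_right hmm hca) hmp
  · exact mul_eq_zero_of_left (idem_mul_left hmm hca) hpm
  · exact mul_eq_zero_of_right (idem_mul_right hmm hcb) hmp
  · exact mul_eq_zero_of_left (idem_mul_left hmm hcb) hpm
  · rw [← o.conj_mul, hba, hcp]
  · rw [← o.conj_mul, hab, hcp]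

end OddForm
set_option maxHeartbeats 2000000 in
open OddForm in
/-- Let `(R, Δ)` be an odd form ring with a hyperbolic pair `η`.  Then the
elementary dilation map `D^η : (R_{ηη})* → U(R, Δ)` is a well-defined injective
group homomorphism, `D^{−η}(a) = D^η(conj(a)⁻¹)`, and
`D^η(a)⁻¹ T^η(u) D^η(a) = T^η(u·a)` for all `u ∈ Δ_η^{|η|'}`.
(Invertible elements of `R_{ηη}` are represented by inverse pairs `(a, b)`;
`Dil o em ep qm qp a b` is `D^η(a)` and `Dil o ep em qp qm (conj a) (conj b)` is
`D^{−η}(conj a)`, so the identity `D^{−η}(ā) = D^η(ā̄⁻¹) = D^η(a⁻¹)` below is the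
stated compatibility between `D^{−η}` and `D^η`.) -/
theorem dilation_injective_hom {R Δ : Type*} [NonUnitalRing R] [Group Δ]
    (o : OddForm R Δ) (em ep : R) (qm qp : Δ) (hη : IsHPair o em ep qm qp) :
    (∀ a b : R, IsInvPair ep a b → o.umem (Dil o em ep qm qp a b)) ∧
    (∀ a b a' b' : R, IsInvPair ep a b → IsInvPair ep a' b' →
      o.umul (Dil o em ep qm qp a b) (Dil o em ep qm qp a' b') =
        Dil o em ep qm qp (a * a') (b' * b)) ∧
    (∀ a b a' b' : R, IsInvPair ep a b → IsInvPair ep a' b' →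
      Dil o em ep qm qp a b = Dil o em ep qm qp a' b' → a = a') ∧
    (∀ a b : R, IsInvPair ep a b →
      Dil o ep em qp qm (o.conj a) (o.conj b) = Dil o em ep qm qp b a) ∧
    (∀ (a b : R) (u : Δ), IsInvPair ep a b → Dmem o em ep u →
      o.umul (o.umul (Dil o em ep qm qp b a) (Tv o qm u)) (Dil o em ep qm qp a b) =
        Tv o qm (o.act u a)) := by
  obtain ⟨hpp, hmm, hpm, hmp, hcp, hπp, hπm, hρp, hρm, hqp, hqm⟩ := hη
  have hcm : o.conj em = ep := by rw [← hcp, o.conj_conj]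
  refine ⟨?_, ?_, ?_, ?_, ?_⟩
  · -- Goal 1: well-definedness (umem)
    intro a b hiv
    obtain ⟨⟨a1,a2,a3,a4⟩,⟨b1,b2,b3,b4⟩,⟨A1,A2,A3,A4⟩,⟨B1,B2,B3,B4⟩,hABa,hBAa⟩ :=
      o.pair_facts hpp hmm hpm hmp hcp hiv
    have haba := hiv.2.2.1
    have hbaa := hiv.2.2.2

    refine ⟨?_, ?_, ?_, ?_⟩
    · simp only [Dil]
      simp only [sub_eq_add_neg, neg_add_rev, mul_add, add_mul, mul_neg, neg_mul, neg_neg, mul_assoc, zero_mul, mul_zero, add_zero, zero_add, neg_zero, o.conj_add, o.conj_neg, o.conj_mul, o.conj_conj, o.conj_zero, hcp, hcm, hpp, hmm, hpm, hmp, a1, a2, a3, a4, b1, b2, b3, b4, A1, A2, A3, A4, B1, B2, B3, B4, haba, hbaa, hABa, hBAa, mul_eq_zero_of_right a1 A4, mul_eq_zero_of_right a1 B4, mul_eq_zero_of_right b1 A4, mul_eq_zero_of_right b1 B4, mul_eq_zero_of_right A1 a4, mul_eq_zero_of_right A1 b4, mul_eq_zero_of_right B1 a4, mul_eq_zero_of_right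 B1 b4, mule hpp, mule hmm, mule hpm, mule hmp, mule a1, mule a2, mule a3, mule a4, mule b1, mule b2, mule b3, mule b4, mule A1, mule A2, mule A3, mule A4, mule B1, mule B2, mule B3, mule B4, mule haba, mule hbaa, mule hABa, mule hBAa, mule (mul_eq_zero_of_right a1 A4), mule (mul_eq_zero_of_right a1 B4), mule (mul_eq_zero_of_right b1 A4), mule (mul_eq_zero_of_right b1 B4), mule (mul_eq_zero_of_right A1 a4), mule (mul_eq_zero_of_right A1 b4), mule (mul_eq_zero_of_right B1 a4), mule (mul_eq_zero_of_right B1 b4)]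
      abel
    · simp only [Dil]
      simp only [sub_eq_add_neg, neg_add_rev, mul_add, add_mul, mul_neg, neg_mul, neg_neg, mul_assoc, zero_mul, mul_zero, add_zero, zero_add, neg_zero, o.conj_add, o.conj_neg, o.conj_mul, o.conj_conj, o.conj_zero, hcp, hcm, hpp, hmm, hpm, hmp, a1, a2, a3, a4, b1, b2, b3, b4, A1, A2, A3, A4, B1, B2, B3, B4, haba, hbaa, hABa, hBAa, mul_eq_zero_of_right a1 A4, mul_eq_zero_of_right a1 B4, mul_eq_zero_of_right b1 A4, mul_eq_zero_of_right b1 B4, mul_eq_zero_of_right A1 a4, mul_eq_zero_of_right A1 b4, mul_eq_zero_of_right B1 a4, mul_eq_zero_of_right B1 b4, mule hpp, mule hmm, mule hpm, mule hmp, mule a1, mule a2, mule a3, mule a4, mule b1, mule b2, mule b3, mule b4, mule A1, mule A2, mule A3, mule A4, mule B1, mule B2, mule B3, mule B4, mule haba, mule hbaa, mule hABa, mule hBAa, mule (mul_eq_zero_of_right a1 A4), mule (mul_eq_zero_of_right a1 B4), mule (mul_eq_zero_of_right b1 A4), mule (mul_eq_zero_of_right b1 B4), mule (mul_eq_zero_of_right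 A1 a4), mule (mul_eq_zero_of_right A1 b4), mule (mul_eq_zero_of_right B1 a4), mule (mul_eq_zero_of_right B1 b4)]
      abel
    · simp only [Dil, ← o.phi_neg, o.pi_mul, o.pi_act, o.pi_phi, hπm, hπp]
      simp only [sub_eq_add_neg, neg_add_rev, mul_add, add_mul, mul_neg, neg_mul, neg_neg, mul_assoc, zero_mul, mul_zero, add_zero, zero_add, neg_zero, o.conj_add, o.conj_neg, o.conj_mul, o.conj_conj, o.conj_zero, hcp, hcm, hpp, hmm, hpm, hmp, a1, a2, a3, a4, b1, b2, b3, b4, A1, A2, A3, A4, B1, B2, B3, B4, haba, hbaa, hABa, hBAa, mul_eq_zero_of_right a1 A4, mul_eq_zero_of_right a1 B4, mul_eq_zero_of_right b1 A4, mul_eq_zero_of_right b1 B4, mul_eq_zero_of_right A1 a4, mul_eq_zero_of_right A1 b4, mul_eq_zero_of_right B1 a4, mul_eq_zero_of_right B1 b4, mule hpp, mule hmm, mule hpm, mule hmp, mule a1, mule a2, mule a3, mule a4, mule b1, mule b2, mule b3, mule b4, mule A1, mule A2, mule A3, mule A4, mule B1, mule B2, mule B3, mule B4, mule haba, mule hbaa,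 mule hABa, mule hBAa, mule (mul_eq_zero_of_right a1 A4), mule (mul_eq_zero_of_right a1 B4), mule (mul_eq_zero_of_right b1 A4), mule (mul_eq_zero_of_right b1 B4), mule (mul_eq_zero_of_right A1 a4), mule (mul_eq_zero_of_right A1 b4), mule (mul_eq_zero_of_right B1 a4), mule (mul_eq_zero_of_right B1 b4)]
      abel
    · simp only [Dil, ← o.phi_neg, o.rho_mul, o.pi_mul, o.pi_act, o.pi_phi,
        o.rho_act, o.rho_phi, hπm, hπp, hρm, hρp]
      simp only [sub_eq_add_neg, neg_add_rev, mul_add, add_mul, mul_neg, neg_mul, neg_neg, mul_assoc, zero_mul, mul_zero, add_zero, zero_add, neg_zero, o.conj_add, o.conj_neg, o.conj_mul, o.conj_conj, o.conj_zero, hcp, hcm, hpp, hmm, hpm, hmp, a1, a2, a3, a4, b1, b2, b3, b4, A1, A2, A3, A4, B1, B2, B3, B4, haba, hbaa, hABa, hBAa, mul_eq_zero_of_right a1 A4, mul_eq_zero_of_right a1 B4, mul_eq_zero_of_right b1 A4, mul_eq_zero_of_right b1 B4, mul_eq_zero_of_right A1 a4, mul_eq_zero_of_right A1 b4, mul_eq_zero_of_right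 B1 a4, mul_eq_zero_of_right B1 b4, mule hpp, mule hmm, mule hpm, mule hmp, mule a1, mule a2, mule a3, mule a4, mule b1, mule b2, mule b3, mule b4, mule A1, mule A2, mule A3, mule A4, mule B1, mule B2, mule B3, mule B4, mule haba, mule hbaa, mule hABa, mule hBAa, mule (mul_eq_zero_of_right a1 A4), mule (mul_eq_zero_of_right a1 B4), mule (mul_eq_zero_of_right b1 A4), mule (mul_eq_zero_of_right b1 B4), mule (mul_eq_zero_of_right A1 a4), mule (mul_eq_zero_of_right A1 b4), mule (mul_eq_zero_of_right B1 a4), mule (mul_eq_zero_of_right B1 b4)]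
      abel
  · -- Goal 2: homomorphism
    intro a b a' b' hiv hiv'
    obtain ⟨⟨a1,a2,a3,a4⟩,⟨b1,b2,b3,b4⟩,⟨A1,A2,A3,A4⟩,⟨B1,B2,B3,B4⟩,hABa,hBAa⟩ :=
      o.pair_facts hpp hmm hpm hmp hcp hiv
    have haba := hiv.2.2.1
    have hbaa := hiv.2.2.2
    obtain ⟨⟨c1,c2,c3,c4⟩,⟨d1,d2,d3,d4⟩,⟨C1,C2,C3,C4⟩,⟨D1,D2,D3,D4⟩,hABc,hBAc⟩ :=
      o.pair_facts hpp hmm hpm hmp hcp hiv'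
    have habc := hiv'.2.2.1
    have hbac := hiv'.2.2.2

    refine Prod.ext ?_ ?_
    · simp only [umul, Dil]
      simp only [sub_eq_add_neg, neg_add_rev, mul_add, add_mul, mul_neg, neg_mul, neg_neg, mul_assoc, zero_mul, mul_zero, add_zero, zero_add, neg_zero, o.conj_add, o.conj_neg, o.conj_mul, o.conj_conj, o.conj_zero, hcp, hcm, hpp, hmm, hpm, hmp, a1, a2, a3, a4, b1, b2, b3, b4, A1, A2, A3, A4, B1, B2, B3, B4, haba, hbaa, hABa, hBAa, c1, c2, c3, c4, d1, d2, d3, d4, C1, C2, C3, C4, D1, D2, D3, D4, habc, hbac, hABc, hBAc, mul_eq_zero_of_right a1 A4, mul_eq_zero_of_right a1 B4, mul_eq_zero_of_right a1 C4, mul_eq_zero_of_right a1 D4, mul_eq_zero_of_right b1 A4, mul_eq_zero_of_right b1 B4, mul_eq_zero_of_right b1 C4, mul_eq_zero_of_right b1 D4, mul_eq_zero_of_right c1 A4, mul_eq_zero_of_right c1 B4, mul_eq_zero_of_right c1 C4, mul_eq_zero_of_right c1 D4, mul_eq_zero_of_right d1 A4, mul_eq_zero_of_right d1 B4, mul_eq_zero_of_right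 d1 C4, mul_eq_zero_of_right d1 D4, mul_eq_zero_of_right A1 a4, mul_eq_zero_of_right A1 b4, mul_eq_zero_of_right A1 c4, mul_eq_zero_of_right A1 d4, mul_eq_zero_of_right B1 a4, mul_eq_zero_of_right B1 b4, mul_eq_zero_of_right B1 c4, mul_eq_zero_of_right B1 d4, mul_eq_zero_of_right C1 a4, mul_eq_zero_of_right C1 b4, mul_eq_zero_of_right C1 c4, mul_eq_zero_of_right C1 d4, mul_eq_zero_of_right D1 a4, mul_eq_zero_of_right D1 b4, mul_eq_zero_of_right D1 c4, mul_eq_zero_of_right D1 d4, mule hpp, mule hmm, mule hpm, mule hmp, mule a1, mule a2, mule a3, mule a4, mule b1, mule b2, mule b3, mule b4, mule A1, mule A2, mule A3, mule A4, mule B1, mule B2, mule B3, mule B4, mule haba, mule hbaa, mule hABa, mule hBAa, mule c1, mule c2, mule c3, mule c4, mule d1, mule d2, mule d3, mule d4, mule C1, mule C2, mule C3, mule C4, mule D1, mule D2, mule D3, mule D4, mule habc, mule hbac, mule hABc, mule hBAc, mule (mul_eq_zero_of_right a1 A4), mule (mul_eq_zero_of_right a1 B4), mule (mul_eq_zero_of_right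 a1 C4), mule (mul_eq_zero_of_right a1 D4), mule (mul_eq_zero_of_right b1 A4), mule (mul_eq_zero_of_right b1 B4), mule (mul_eq_zero_of_right b1 C4), mule (mul_eq_zero_of_right b1 D4), mule (mul_eq_zero_of_right c1 A4), mule (mul_eq_zero_of_right c1 B4), mule (mul_eq_zero_of_right c1 C4), mule (mul_eq_zero_of_right c1 D4), mule (mul_eq_zero_of_right d1 A4), mule (mul_eq_zero_of_right d1 B4), mule (mul_eq_zero_of_right d1 C4), mule (mul_eq_zero_of_right d1 D4), mule (mul_eq_zero_of_right A1 a4), mule (mul_eq_zero_of_right A1 b4), mule (mul_eq_zero_of_right A1 c4), mule (mul_eq_zero_of_right A1 d4), mule (mul_eq_zero_of_right B1 a4), mule (mul_eq_zero_of_right B1 b4), mule (mul_eq_zero_of_right B1 c4), mule (mul_eq_zero_of_right B1 d4), mule (mul_eq_zero_of_right C1 a4), mule (mul_eq_zero_of_right C1 b4), mule (mul_eq_zero_of_right C1 c4), mule (mul_eq_zero_of_right C1 d4), mule (mul_eq_zero_of_right D1 a4), mule (mul_eq_zero_of_right D1 b4), mule (mul_eq_zero_of_right D1 c4), mule (mul_eq_zero_of_right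 D1 d4)]
      abel
    · simp only [umul]
      rw [o.Dil_snd (1 : Δ) qm qp a b, o.Dil_snd (1 : Δ) qm qp a' b',
        o.Dil_snd (1 : Δ) qm qp (a * a') (b' * b), o.actA_C,
        o.mulC 1 qm qp _ _ _ _ _ _ _ _ (by rw [o.pi_one, mul_zero])
          (by rw [o.pi_one, mul_zero])]
      simp only [Dil]
      refine o.C_congr ?_ ?_ ?_ (o.phi_congr ?_) <;>
      · simp only [hπp, hπm, hρp, hρm, sub_eq_add_neg, neg_add_rev, mul_add, add_mul, mul_neg, neg_mul, neg_neg, mul_assoc, zero_mul, mul_zero, add_zero, zero_add, neg_zero, o.conj_add, o.conj_neg, o.conj_mul, o.conj_conj, o.conj_zero, hcp, hcm, hpp, hmm, hpm, hmp, a1, a2, a3, a4, b1, b2, b3, b4, A1, A2, A3, A4, B1, B2, B3, B4, haba, hbaa, hABa, hBAa, c1, c2, c3, c4, d1, d2, d3, d4, C1, C2, C3, C4, D1, D2, D3, D4, habc, hbac, hABc, hBAc, mul_eq_zero_of_right a1 A4, mul_eq_zero_of_right a1 B4, mul_eq_zero_of_right a1 C4, mul_eq_zero_of_right a1 D4, mul_eq_zero_of_right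 b1 A4, mul_eq_zero_of_right b1 B4, mul_eq_zero_of_right b1 C4, mul_eq_zero_of_right b1 D4, mul_eq_zero_of_right c1 A4, mul_eq_zero_of_right c1 B4, mul_eq_zero_of_right c1 C4, mul_eq_zero_of_right c1 D4, mul_eq_zero_of_right d1 A4, mul_eq_zero_of_right d1 B4, mul_eq_zero_of_right d1 C4, mul_eq_zero_of_right d1 D4, mul_eq_zero_of_right A1 a4, mul_eq_zero_of_right A1 b4, mul_eq_zero_of_right A1 c4, mul_eq_zero_of_right A1 d4, mul_eq_zero_of_right B1 a4, mul_eq_zero_of_right B1 b4, mul_eq_zero_of_right B1 c4, mul_eq_zero_of_right B1 d4, mul_eq_zero_of_right C1 a4, mul_eq_zero_of_right C1 b4, mul_eq_zero_of_right C1 c4, mul_eq_zero_of_right C1 d4, mul_eq_zero_of_right D1 a4, mul_eq_zero_of_right D1 b4, mul_eq_zero_of_right D1 c4, mul_eq_zero_of_right D1 d4, mule hpp, mule hmm, mule hpm, mule hmp, mule a1, mule a2, mule a3, mule a4, mule b1, mule b2, mule b3, mule b4, mule A1, mule A2, mule A3, mule A4, mule B1, mule B2, mule B3, mule B4, mule haba,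 mule hbaa, mule hABa, mule hBAa, mule c1, mule c2, mule c3, mule c4, mule d1, mule d2, mule d3, mule d4, mule C1, mule C2, mule C3, mule C4, mule D1, mule D2, mule D3, mule D4, mule habc, mule hbac, mule hABc, mule hBAc, mule (mul_eq_zero_of_right a1 A4), mule (mul_eq_zero_of_right a1 B4), mule (mul_eq_zero_of_right a1 C4), mule (mul_eq_zero_of_right a1 D4), mule (mul_eq_zero_of_right b1 A4), mule (mul_eq_zero_of_right b1 B4), mule (mul_eq_zero_of_right b1 C4), mule (mul_eq_zero_of_right b1 D4), mule (mul_eq_zero_of_right c1 A4), mule (mul_eq_zero_of_right c1 B4), mule (mul_eq_zero_of_right c1 C4), mule (mul_eq_zero_of_right c1 D4), mule (mul_eq_zero_of_right d1 A4), mule (mul_eq_zero_of_right d1 B4), mule (mul_eq_zero_of_right d1 C4), mule (mul_eq_zero_of_right d1 D4), mule (mul_eq_zero_of_right A1 a4), mule (mul_eq_zero_of_right A1 b4), mule (mul_eq_zero_of_right A1 c4), mule (mul_eq_zero_of_right A1 d4), mule (mul_eq_zero_of_right B1 a4), mule (mul_eq_zero_of_right B1 b4), mule (mul_eq_zero_of_right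 B1 c4), mule (mul_eq_zero_of_right B1 d4), mule (mul_eq_zero_of_right C1 a4), mule (mul_eq_zero_of_right C1 b4), mule (mul_eq_zero_of_right C1 c4), mule (mul_eq_zero_of_right C1 d4), mule (mul_eq_zero_of_right D1 a4), mule (mul_eq_zero_of_right D1 b4), mule (mul_eq_zero_of_right D1 c4), mule (mul_eq_zero_of_right D1 d4)]
        try abel
  · -- Goal 3: injectivity
    intro a b a' b' hiv hiv' h
    have h1 := congrArg Prod.fst h
    have key : ∀ c d : R, IsInvPair ep c d →
        ep * (c + o.conj d - (ep + em)) * ep + ep = c := by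
      intro c d hcd
      obtain ⟨⟨c1,c2,c3,c4⟩,⟨d1,d2,d3,d4⟩,⟨C1,C2,C3,C4⟩,⟨D1,D2,D3,D4⟩,hABc,hBAc⟩ :=
        o.pair_facts hpp hmm hpm hmp hcp hcd
      have habc := hcd.2.2.1
      have hbac := hcd.2.2.2

      simp only [sub_eq_add_neg, neg_add_rev, mul_add, add_mul, mul_neg, neg_mul, neg_neg, mul_assoc, zero_mul, mul_zero, add_zero, zero_add, neg_zero, o.conj_add, o.conj_neg, o.conj_mul, o.conj_conj, o.conj_zero, hcp, hcm, hpp, hmm, hpm, hmp, c1, c2, c3, c4, d1, d2, d3, d4, C1, C2, C3, C4, D1, D2, D3, D4, habc, hbac, hABc, hBAc, mul_eq_zero_of_right c1 C4, mul_eq_zero_of_right c1 D4, mul_eq_zero_of_right d1 C4, mul_eq_zero_of_right d1 D4, mul_eq_zero_of_right C1 c4, mul_eq_zero_of_right C1 d4, mul_eq_zero_of_right D1 c4, mul_eq_zero_of_right D1 d4, mule hpp, mule hmm, mule hpm, mule hmp, mule c1, mule c2, mule c3, mule c4, mule d1, mule d2, mule d3, mule d4, mule C1, mule C2, mule C3,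 mule C4, mule D1, mule D2, mule D3, mule D4, mule habc, mule hbac, mule hABc, mule hBAc, mule (mul_eq_zero_of_right c1 C4), mule (mul_eq_zero_of_right c1 D4), mule (mul_eq_zero_of_right d1 C4), mule (mul_eq_zero_of_right d1 D4), mule (mul_eq_zero_of_right C1 c4), mule (mul_eq_zero_of_right C1 d4), mule (mul_eq_zero_of_right D1 c4), mule (mul_eq_zero_of_right D1 d4)]
      abel
    rw [← key a b hiv, ← key a' b' hiv']
    simp only [Dil] at h1
    rw [h1]
  · -- Goal 4
    intro a b hiv
    obtain ⟨⟨a1,a2,a3,a4⟩,⟨b1,b2,b3,b4⟩,⟨A1,A2,A3,A4⟩,⟨B1,B2,B3,B4⟩,hABa,hBAa⟩ :=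
      o.pair_facts hpp hmm hpm hmp hcp hiv
    have haba := hiv.2.2.1
    have hbaa := hiv.2.2.2

    refine Prod.ext ?_ ?_
    · simp only [Dil, o.conj_conj]
      abel
    · rw [o.Dil_snd (1 : Δ) qm qp b a]
      have step1 : (Dil o ep em qp qm (o.conj a) (o.conj b)).2
          = o.Cf 1 qm qp 0 0 (b - ep) 0 * o.Cf 1 qm qp 0 (o.conj a - em) 0 (em - o.conj a) := by
        simp only [Dil, Cf, o.act_zero, o.phi_zero, one_mul, mul_one, o.conj_conj,
          ← o.phi_neg, neg_sub, mul_assoc]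
      rw [step1, o.mulC 1 qm qp _ _ _ _ _ _ _ _ (by rw [o.pi_one, mul_zero])
        (by rw [o.pi_one, mul_zero])]
      refine o.C_congr (by abel) (by abel) (by abel) (o.phi_congr ?_)
      simp only [hπp, hπm]
      simp only [sub_eq_add_neg, neg_add_rev, mul_add, add_mul, mul_neg, neg_mul, neg_neg, mul_assoc, zero_mul, mul_zero, add_zero, zero_add, neg_zero, o.conj_add, o.conj_neg, o.conj_mul, o.conj_conj, o.conj_zero, hcp, hcm, hpp, hmm, hpm, hmp, a1, a2, a3, a4, b1, b2, b3, b4, A1, A2, A3, A4, B1, B2, B3, B4, haba, hbaa, hABa, hBAa, mul_eq_zero_of_right a1 A4, mul_eq_zero_of_right a1 B4, mul_eq_zero_of_right b1 A4, mul_eq_zero_of_right b1 B4, mul_eq_zero_of_right A1 a4, mul_eq_zero_of_right A1 b4, mul_eq_zero_of_right B1 a4, mul_eq_zero_of_right B1 b4, mule hpp, mule hmm, mule hpm, mule hmp, mule a1, mule a2, mule a3, mule a4, mule b1, mule b2, mule b3, mule b4, mule A1, mule A2, mule A3, mule A4, mule B1, mule B2, mule B3, mule B4, mule haba, mule hbaa,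 mule hABa, mule hBAa, mule (mul_eq_zero_of_right a1 A4), mule (mul_eq_zero_of_right a1 B4), mule (mul_eq_zero_of_right b1 A4), mule (mul_eq_zero_of_right b1 B4), mule (mul_eq_zero_of_right A1 a4), mule (mul_eq_zero_of_right A1 b4), mule (mul_eq_zero_of_right B1 a4), mule (mul_eq_zero_of_right B1 b4)]
      abel
  · -- Goal 5: conjugation identity
    intro a b u hiv hu
    obtain ⟨⟨a1,a2,a3,a4⟩,⟨b1,b2,b3,b4⟩,⟨A1,A2,A3,A4⟩,⟨B1,B2,B3,B4⟩,hABa,hBAa⟩ :=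
      o.pair_facts hpp hmm hpm hmp hcp hiv
    have haba := hiv.2.2.1
    have hbaa := hiv.2.2.2
    obtain ⟨hu1, hu2⟩ := hu
    have hP1 : o.pi u * ep = o.pi u := by
      have h := o.pi_act u ep; rw [hu1] at h; exact h.symm
    have hpP : ep * o.pi u = 0 := by
      have h : ep * ((ep + em) * o.pi u) = ep * o.pi u := by
        rw [← mul_assoc, mul_add, hpp, hpm, add_zero]
      rw [hu2, mul_zero] at h; exact h.symm
    have hmP : em * o.pi u = 0 := by
      have h : em * ((ep + em) * o.pi u) = em * o.pi u := by
        rw [← mul_assoc, mul_add, hmm, hmp, zero_add]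
      rw [hu2, mul_zero] at h; exact h.symm
    have hr : o.rho u = em * o.rho u * ep := by
      have h := o.rho_act u ep; rw [hu1, hcp] at h; exact h
    have hr1 : o.rho u * ep = o.rho u := idem_mul_right hpp hr
    have hr2 : em * o.rho u = o.rho u := idem_mul_left hmm hr
    have hr3 : o.rho u * em = 0 := mul_eq_zero_of_right hr1 hpm
    have hr4 : ep * o.rho u = 0 := mul_eq_zero_of_left hr2 hpm
    have hcr : o.conj (o.rho u) = em * o.conj (o.rho u) * ep := by
      conv_lhs => rw [hr]
      rw [o.conj_mul, o.conj_mul, hcp, hcm, ← mul_assoc]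
    have hR1 : o.conj (o.rho u) * ep = o.conj (o.rho u) := idem_mul_right hpp hcr
    have hR2 : em * o.conj (o.rho u) = o.conj (o.rho u) := idem_mul_left hmm hcr
    have hR3 : o.conj (o.rho u) * em = 0 := mul_eq_zero_of_right hR1 hpm
    have hR4 : ep * o.conj (o.rho u) = 0 := mul_eq_zero_of_left hR2 hpm
    have hQ2 : em * o.conj (o.pi u) = o.conj (o.pi u) := by
      have h := congrArg o.conj hP1; rw [o.conj_mul, hcp] at h; exact h
    have hQ3 : o.conj (o.pi u) * em = 0 := by
      have h := congrArg o.conj hpP; rw [o.conj_mul, hcp, o.conj_zero] at h; exact h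
    have hQ4 : o.conj (o.pi u) * ep = 0 := by
      have h := congrArg o.conj hmP; rw [o.conj_mul, hcm, o.conj_zero] at h; exact h
    have hQep : ep * o.conj (o.pi u) = 0 := mul_eq_zero_of_left hQ2 hpm
    have hQP : o.conj (o.pi u) * o.pi u = -(o.rho u + o.conj (o.rho u)) :=
      eq_neg_of_add_eq_zero_right (o.rho_pi u)
    have hc1 : o.conj (o.pi qp) * o.pi u = 0 := by rw [hπp, hcp]; exact hmP
    have hc2 : o.conj (o.pi qm) * o.pi u = 0 := by rw [hπm, hcm]; exact hpP
    refine Prod.ext ?_ ?_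
    · simp only [umul, Dil, Tv, o.rho_act, o.pi_act]
      simp only [sub_eq_add_neg, neg_add_rev, mul_add, add_mul, mul_neg, neg_mul, neg_neg, mul_assoc, zero_mul, mul_zero, add_zero, zero_add, neg_zero, o.conj_add, o.conj_neg, o.conj_mul, o.conj_conj, o.conj_zero, hcp, hcm, hpp, hmm, hpm, hmp, a1, a2, a3, a4, b1, b2, b3, b4, A1, A2, A3, A4, B1, B2, B3, B4, haba, hbaa, hABa, hBAa, mul_eq_zero_of_right a1 A4, mul_eq_zero_of_right a1 B4, mul_eq_zero_of_right b1 A4, mul_eq_zero_of_right b1 B4, mul_eq_zero_of_right A1 a4, mul_eq_zero_of_right A1 b4, mul_eq_zero_of_right B1 a4, mul_eq_zero_of_right B1 b4, mule hpp, mule hmm, mule hpm, mule hmp, mule a1, mule a2, mule a3, mule a4, mule b1, mule b2, mule b3, mule b4, mule A1, mule A2, mule A3, mule A4, mule B1, mule B2, mule B3, mule B4, mule haba, mule hbaa, mule hABa, mule hBAa, mule (mul_eq_zero_of_right a1 A4), mule (mul_eq_zero_of_right a1 B4), mule (mul_eq_zero_of_right b1 A4), mule (mul_eq_zero_of_right b1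 B4), mule (mul_eq_zero_of_right A1 a4), mule (mul_eq_zero_of_right A1 b4), mule (mul_eq_zero_of_right B1 a4), mule (mul_eq_zero_of_right B1 b4), hP1, hpP, hmP, hr1, hr2, hr3, hr4, hR1, hR2, hR3, hR4, hQ2, hQ3, hQ4, hQep, hQP, mul_eq_zero_of_right a1 hpP, mul_eq_zero_of_right a1 hr4, mul_eq_zero_of_right a1 hR4, mul_eq_zero_of_right a1 hQep, mul_eq_zero_of_right b1 hpP, mul_eq_zero_of_right b1 hr4, mul_eq_zero_of_right b1 hR4, mul_eq_zero_of_right b1 hQep, mul_eq_zero_of_right A1 hmP, mul_eq_zero_of_right B1 hmP, mul_eq_zero_of_right hr1 hpP, mul_eq_zero_of_right hr1 A4, mul_eq_zero_of_right hr1 B4, mul_eq_zero_of_right hr1 hpm, mul_eq_zero_of_right hr1 hr4, mul_eq_zero_of_right hr1 hR4, mul_eq_zero_of_right hr1 hQep, mul_eq_zero_of_right hR1 hpP, mul_eq_zero_of_right hR1 A4, mul_eq_zero_of_right hR1 B4, mul_eq_zero_of_right hR1 hpm, mul_eq_zero_of_right hR1 hr4, mul_eq_zero_of_right hR1 hR4,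 mul_eq_zero_of_right hR1 hQep, mul_eq_zero_of_right hP1 hpP, mul_eq_zero_of_right hP1 A4, mul_eq_zero_of_right hP1 B4, mul_eq_zero_of_right hP1 hpm, mul_eq_zero_of_right hP1 hr4, mul_eq_zero_of_right hP1 hR4, mul_eq_zero_of_right hP1 hQep, mul_eq_zero_of_left a2 hQ4, mul_eq_zero_of_left b2 hQ4, mul_eq_zero_of_left A2 hQ3, mul_eq_zero_of_left B2 hQ3, mul_eq_zero_of_left hr2 hQ3, mul_eq_zero_of_left hR2 hQ3, mul_eq_zero_of_left hQ2 hQ3, mule hP1, mule hpP, mule hmP, mule hr1, mule hr2, mule hr3, mule hr4, mule hR1, mule hR2, mule hR3, mule hR4, mule hQ2, mule hQ3, mule hQ4, mule hQep, mule hQP, mule (mul_eq_zero_of_right a1 hpP), mule (mul_eq_zero_of_right a1 hr4), mule (mul_eq_zero_of_right a1 hR4), mule (mul_eq_zero_of_right a1 hQep), mule (mul_eq_zero_of_right b1 hpP), mule (mul_eq_zero_of_right b1 hr4), mule (mul_eq_zero_of_right b1 hR4), mule (mul_eq_zero_of_right b1 hQep), mule (mul_eq_zero_of_right A1 hmP),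 mule (mul_eq_zero_of_right B1 hmP), mule (mul_eq_zero_of_right hr1 hpP), mule (mul_eq_zero_of_right hr1 A4), mule (mul_eq_zero_of_right hr1 B4), mule (mul_eq_zero_of_right hr1 hpm), mule (mul_eq_zero_of_right hr1 hr4), mule (mul_eq_zero_of_right hr1 hR4), mule (mul_eq_zero_of_right hr1 hQep), mule (mul_eq_zero_of_right hR1 hpP), mule (mul_eq_zero_of_right hR1 A4), mule (mul_eq_zero_of_right hR1 B4), mule (mul_eq_zero_of_right hR1 hpm), mule (mul_eq_zero_of_right hR1 hr4), mule (mul_eq_zero_of_right hR1 hR4), mule (mul_eq_zero_of_right hR1 hQep), mule (mul_eq_zero_of_right hP1 hpP), mule (mul_eq_zero_of_right hP1 A4), mule (mul_eq_zero_of_right hP1 B4), mule (mul_eq_zero_of_right hP1 hpm), mule (mul_eq_zero_of_right hP1 hr4), mule (mul_eq_zero_of_right hP1 hR4), mule (mul_eq_zero_of_right hP1 hQep), mule (mul_eq_zero_of_left a2 hQ4), mule (mul_eq_zero_of_left b2 hQ4), mule (mul_eq_zero_of_left A2 hQ3), mule (mul_eq_zero_of_left B2 hQ3), mule (mul_eq_zero_of_left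 hr2 hQ3), mule (mul_eq_zero_of_left hR2 hQ3), mule (mul_eq_zero_of_left hQ2 hQ3)]
      try abel
    · simp only [umul]
      rw [o.Dil_snd u qm qp b a, o.Tv_snd u qm qp hu1, o.Dil_snd u qm qp a b,
        o.Tv_snd' u qm qp a, o.actA_C,
        o.mulC u qm qp _ _ _ _ _ _ _ _ hc1 hc2, o.actA_C,
        o.mulC u qm qp _ _ _ _ _ _ _ _ hc1 hc2]
      simp only [Dil, Tv]
      refine o.C_congr ?_ ?_ ?_ (o.phi_congr ?_) <;>
      · simp only [hπp, hπm, hρp, hρm, o.rho_act, o.pi_act, sub_eq_add_neg, neg_add_rev, mul_add, add_mul, mul_neg, neg_mul, neg_neg, mul_assoc, zero_mul, mul_zero, add_zero, zero_add, neg_zero, o.conj_add, o.conj_neg, o.conj_mul, o.conj_conj, o.conj_zero, hcp, hcm, hpp, hmm, hpm, hmp, a1, a2, a3, a4, b1, b2, b3, b4, A1, A2, A3, A4, B1, B2, B3, B4, haba, hbaa, hABa, hBAa, mul_eq_zero_of_right a1 A4, mul_eq_zero_of_right a1 B4, mul_eq_zero_of_right b1 A4, mul_eq_zero_of_right b1 B4,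 mul_eq_zero_of_right A1 a4, mul_eq_zero_of_right A1 b4, mul_eq_zero_of_right B1 a4, mul_eq_zero_of_right B1 b4, mule hpp, mule hmm, mule hpm, mule hmp, mule a1, mule a2, mule a3, mule a4, mule b1, mule b2, mule b3, mule b4, mule A1, mule A2, mule A3, mule A4, mule B1, mule B2, mule B3, mule B4, mule haba, mule hbaa, mule hABa, mule hBAa, mule (mul_eq_zero_of_right a1 A4), mule (mul_eq_zero_of_right a1 B4), mule (mul_eq_zero_of_right b1 A4), mule (mul_eq_zero_of_right b1 B4), mule (mul_eq_zero_of_right A1 a4), mule (mul_eq_zero_of_right A1 b4), mule (mul_eq_zero_of_right B1 a4), mule (mul_eq_zero_of_right B1 b4), hP1, hpP, hmP, hr1, hr2, hr3, hr4, hR1, hR2, hR3, hR4, hQ2, hQ3, hQ4, hQep, hQP, mul_eq_zero_of_right a1 hpP, mul_eq_zero_of_right a1 hr4, mul_eq_zero_of_right a1 hR4, mul_eq_zero_of_right a1 hQep, mul_eq_zero_of_right b1 hpP, mul_eq_zero_of_right b1 hr4, mul_eq_zero_of_right b1 hR4, mul_eq_zero_of_right b1 hQep, mul_eq_zero_of_right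 A1 hmP, mul_eq_zero_of_right B1 hmP, mul_eq_zero_of_right hr1 hpP, mul_eq_zero_of_right hr1 A4, mul_eq_zero_of_right hr1 B4, mul_eq_zero_of_right hr1 hpm, mul_eq_zero_of_right hr1 hr4, mul_eq_zero_of_right hr1 hR4, mul_eq_zero_of_right hr1 hQep, mul_eq_zero_of_right hR1 hpP, mul_eq_zero_of_right hR1 A4, mul_eq_zero_of_right hR1 B4, mul_eq_zero_of_right hR1 hpm, mul_eq_zero_of_right hR1 hr4, mul_eq_zero_of_right hR1 hR4, mul_eq_zero_of_right hR1 hQep, mul_eq_zero_of_right hP1 hpP, mul_eq_zero_of_right hP1 A4, mul_eq_zero_of_right hP1 B4, mul_eq_zero_of_right hP1 hpm, mul_eq_zero_of_right hP1 hr4, mul_eq_zero_of_right hP1 hR4, mul_eq_zero_of_right hP1 hQep, mul_eq_zero_of_left a2 hQ4, mul_eq_zero_of_left b2 hQ4, mul_eq_zero_of_left A2 hQ3, mul_eq_zero_of_left B2 hQ3, mul_eq_zero_of_left hr2 hQ3, mul_eq_zero_of_left hR2 hQ3, mul_eq_zero_of_left hQ2 hQ3, mule hP1, mule hpP, mule hmP,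 mule hr1, mule hr2, mule hr3, mule hr4, mule hR1, mule hR2, mule hR3, mule hR4, mule hQ2, mule hQ3, mule hQ4, mule hQep, mule hQP, mule (mul_eq_zero_of_right a1 hpP), mule (mul_eq_zero_of_right a1 hr4), mule (mul_eq_zero_of_right a1 hR4), mule (mul_eq_zero_of_right a1 hQep), mule (mul_eq_zero_of_right b1 hpP), mule (mul_eq_zero_of_right b1 hr4), mule (mul_eq_zero_of_right b1 hR4), mule (mul_eq_zero_of_right b1 hQep), mule (mul_eq_zero_of_right A1 hmP), mule (mul_eq_zero_of_right B1 hmP), mule (mul_eq_zero_of_right hr1 hpP), mule (mul_eq_zero_of_right hr1 A4), mule (mul_eq_zero_of_right hr1 B4), mule (mul_eq_zero_of_right hr1 hpm), mule (mul_eq_zero_of_right hr1 hr4), mule (mul_eq_zero_of_right hr1 hR4), mule (mul_eq_zero_of_right hr1 hQep), mule (mul_eq_zero_of_right hR1 hpP), mule (mul_eq_zero_of_right hR1 A4), mule (mul_eq_zero_of_right hR1 B4), mule (mul_eq_zero_of_right hR1 hpm), mule (mul_eq_zero_of_right hR1 hr4), mule (mul_eq_zero_of_right hR1 hR4), mule (mul_eq_zero_of_right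 hR1 hQep), mule (mul_eq_zero_of_right hP1 hpP), mule (mul_eq_zero_of_right hP1 A4), mule (mul_eq_zero_of_right hP1 B4), mule (mul_eq_zero_of_right hP1 hpm), mule (mul_eq_zero_of_right hP1 hr4), mule (mul_eq_zero_of_right hP1 hR4), mule (mul_eq_zero_of_right hP1 hQep), mule (mul_eq_zero_of_left a2 hQ4), mule (mul_eq_zero_of_left b2 hQ4), mule (mul_eq_zero_of_left A2 hQ3), mule (mul_eq_zero_of_left B2 hQ3), mule (mul_eq_zero_of_left hr2 hQ3), mule (mul_eq_zero_of_left hR2 hQ3), mule (mul_eq_zero_of_left hQ2 hQ3)]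
        try abel
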